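/- For two 2n×2n symplectic matrices S and Ŝ, the rank of the Wronskian of the 4n×2n matrices ⟨Ŝ⟩ and ⟨S⟩ equals rank(Ŝ − S): rank(⟨Ŝ⟩ᵀ J₄ₙ ⟨S⟩) = rank(Ŝ − S), where J₄ₙ = [[0, I₂ₙ], [−I₂ₙ, 0]]. -/

import Mathlib

open Matrix
noncomputable section

/-- The standard symplectic matrix `J = [[0, I], [-I, 0]]`. -/
def Jmat (k : Type*) [Fintype k] [DecidableEq k] : Matrix (k ⊕ k) (k ⊕ k) ℝ :=
  fromBlocks 0 1 (-1) 0

/-- A matrix `S` is symplectic if `Sᵀ J S = J`. -/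
def IsSymplectic {k : Type*} [Fintype k] [DecidableEq k]
    (S : Matrix (k ⊕ k) (k ⊕ k) ℝ) : Prop :=
  Sᵀ * Jmat k * S = Jmat k

/-- `S'` is the (entrywise) derivative family of the matrix family `S`. -/
def HasMatDeriv {k m : Type*} (S S' : ℝ → Matrix k m ℝ) : Prop :=
  ∀ (l : ℝ) (i : k) (j : m), HasDerivAt (fun t => S t i j) (S' l i j) l

/-- `Ψ(S(λ)) = Jᵀ S'(λ) S(λ)⁻¹`, where `S'` is a derivative family of `S`. -/
def Psi {k : Type*} [Fintype k] [DecidableEq k]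
    (S S' : ℝ → Matrix (k ⊕ k) (k ⊕ k) ℝ) (l : ℝ) : Matrix (k ⊕ k) (k ⊕ k) ℝ :=
  (Jmat k)ᵀ * S' l * (S l)⁻¹

/-- The `4n×2n` matrix `⟨S⟩` with upper block `𝒳 = (I 0; A B)` and
lower block `𝒰 = (0 −I; C D)`, for `S = (A B; C D)`. -/
def angleMat {k : Type*} [Fintype k] [DecidableEq k]
    (S : Matrix (k ⊕ k) (k ⊕ k) ℝ) : Matrix ((k ⊕ k) ⊕ (k ⊕ k)) (k ⊕ k) ℝ :=
  fromRows (fromBlocks 1 0 S.toBlocks₁₁ S.toBlocks₁₂)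
           (fromBlocks 0 (-1) S.toBlocks₂₁ S.toBlocks₂₂)


lemma key {k : Type*} [Fintype k] [DecidableEq k]
    (S Sh : Matrix (k ⊕ k) (k ⊕ k) ℝ) :
    (angleMat Sh)ᵀ * Jmat (k ⊕ k) * angleMat S = Shᵀ * Jmat k * S - Jmat k := by
  rw [← fromBlocks_toBlocks S, ← fromBlocks_toBlocks Sh]
  simp only [angleMat, Jmat, toBlocks_fromBlocks₁₁, toBlocks_fromBlocks₁₂,
    toBlocks_fromBlocks₂₁, toBlocks_fromBlocks₂₂, transpose_fromRows, fromBlocks_transpose,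
    Matrix.mul_assoc, fromBlocks_mul_fromRows, fromCols_mul_fromRows,
    fromBlocks_multiply, transpose_one, transpose_zero, transpose_neg]
  ext (i|i) (j|j) <;>
    simp [fromBlocks, mul_apply, Finset.sum_sub_distrib, Matrix.one_apply, ite_mul, mul_ite] <;> ring

lemma Jmat_mul_neg_Jmat (k : Type*) [Fintype k] [DecidableEq k] :
    Jmat k * (-Jmat k) = 1 := by
  simp [Jmat, fromBlocks_multiply, ← fromBlocks_one, fromBlocks_neg]

lemma isUnit_det_Jmat (k : Type*) [Fintype k] [DecidableEq k] :
    IsUnit (Jmat k).det :=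
  IsUnit.of_mul_eq_one _ (by rw [← det_mul, Jmat_mul_neg_Jmat, det_one])

lemma isUnit_det_of_symplectic {k : Type*} [Fintype k] [DecidableEq k]
    {S : Matrix (k ⊕ k) (k ⊕ k) ℝ} (hS : IsSymplectic S) : IsUnit S.det := by
  have h := congrArg Matrix.det hS
  rw [det_mul, det_mul, det_transpose] at h
  have hJ := isUnit_det_Jmat k
  have h2 : S.det * S.det = 1 :=
    mul_right_cancel₀ hJ.ne_zero (by rw [one_mul]; linear_combination h)
  exact IsUnit.of_mul_eq_one _ h2

/-- `rank(⟨Ŝ⟩ᵀ J₄ₙ ⟨S⟩) = rank(Ŝ − S)` for symplectic `S`, `Ŝ`. -/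
theorem statement17 (n : ℕ) (S Sh : Matrix (Fin n ⊕ Fin n) (Fin n ⊕ Fin n) ℝ)
    (hS : IsSymplectic S) (hSh : IsSymplectic Sh) :
    ((angleMat Sh)ᵀ * Jmat (Fin n ⊕ Fin n) * angleMat S).rank = (Sh - S).rank := by
  have hkey := key S Sh
  have hW : (angleMat Sh)ᵀ * Jmat (Fin n ⊕ Fin n) * angleMat S
      = (Shᵀ * Jmat (Fin n)) * (S - Sh) := by
    rw [hkey, Matrix.mul_sub]
    congr 1
    exact hSh.symm
  have hSSh : S - Sh = (-1 : Matrix _ _ ℝ) * (Sh - S) := by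
    rw [neg_one_mul, neg_sub]
  rw [hW, rank_mul_eq_right_of_isUnit_det _ _
    (by rw [det_mul, det_transpose]
        exact ((isUnit_det_of_symplectic hSh).mul (isUnit_det_Jmat _))),
    hSSh, rank_mul_eq_right_of_isUnit_det _ _ (by simp [det_neg])]
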